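/- Let C be a coalgebra, A an algebra and right C-comodule, and suppose (A,C)_ψ is an entwining structure with A a right (A,C)_ψ-module via its product and coaction. If Φ : C → A is a convolution invertible right C-comodule map, then for all c ∈ C: ψ(c₍₁₎ ⊗ Φ⁻¹(c₍₂₎)) = Φ⁻¹(c) · Δ_A(1), i.e. ψ(c₍₁₎ ⊗ Φ⁻¹(c₍₂₎)) = Φ⁻¹(c)1₍₀₎ ⊗ 1₍₁₎. -/
import Mathlib


open TensorProduct LinearMap

/-- An entwining structure `(A, C)_ψ`. -/
structure Entwining (k A C : Type) [Field k] [Ring A] [Algebra k A]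
    [AddCommGroup C] [Module k C] [Coalgebra k C] where
  ψ : C ⊗[k] A →ₗ[k] A ⊗[k] C
  entw_mul : ψ ∘ₗ (mul' k A).lTensor C =
    (mul' k A).rTensor C ∘ₗ (TensorProduct.assoc k A A C).symm.toLinearMap ∘ₗ
      ψ.lTensor A ∘ₗ (TensorProduct.assoc k A C A).toLinearMap ∘ₗ
      ψ.rTensor A ∘ₗ (TensorProduct.assoc k C A A).symm.toLinearMap
  entw_unit : ∀ c : C, ψ (c ⊗ₜ[k] 1) = 1 ⊗ₜ[k] c
  entw_comul : (Coalgebra.comul (R := k) (A := C)).lTensor A ∘ₗ ψ =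
    (TensorProduct.assoc k A C C).toLinearMap ∘ₗ ψ.rTensor C ∘ₗ
      (TensorProduct.assoc k C A C).symm.toLinearMap ∘ₗ ψ.lTensor C ∘ₗ
      (TensorProduct.assoc k C C A).toLinearMap ∘ₗ
      (Coalgebra.comul (R := k) (A := C)).rTensor A
  entw_counit : (TensorProduct.rid k A).toLinearMap ∘ₗ
      (Coalgebra.counit (R := k) (A := C)).lTensor A ∘ₗ ψ =
    (TensorProduct.lid k A).toLinearMap ∘ₗ (Coalgebra.counit (R := k) (A := C)).rTensor A

/-- A right `C`-comodule structure on `V`. -/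
structure RComod (k C V : Type) [Field k] [AddCommGroup C] [Module k C] [Coalgebra k C]
    [AddCommGroup V] [Module k V] where
  ρ : V →ₗ[k] V ⊗[k] C
  coassoc : (Coalgebra.comul (R := k) (A := C)).lTensor V ∘ₗ ρ =
    (TensorProduct.assoc k V C C).toLinearMap ∘ₗ ρ.rTensor C ∘ₗ ρ
  counit_id : (TensorProduct.rid k V).toLinearMap ∘ₗ
      (Coalgebra.counit (R := k) (A := C)).lTensor V ∘ₗ ρ = LinearMap.id

/-- A left `C`-comodule structure on `V`. -/
structure LComod (k C V : Type) [Field k] [AddCommGroup C] [Module k C] [Coalgebra k C]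
    [AddCommGroup V] [Module k V] where
  ρ : V →ₗ[k] C ⊗[k] V
  coassoc : (Coalgebra.comul (R := k) (A := C)).rTensor V ∘ₗ ρ =
    (TensorProduct.assoc k C C V).symm.toLinearMap ∘ₗ ρ.lTensor C ∘ₗ ρ
  counit_id : (TensorProduct.lid k V).toLinearMap ∘ₗ
      (Coalgebra.counit (R := k) (A := C)).rTensor V ∘ₗ ρ = LinearMap.id

/-- A right `A`-module structure (`k`-linear) on `M`. -/
structure RAct (k A M : Type) [Field k] [Ring A] [Algebra k A]
    [AddCommGroup M] [Module k M] where
  act : M ⊗[k] A →ₗ[k] M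
  act_one : ∀ m : M, act (m ⊗ₜ[k] 1) = m
  act_mul : ∀ (m : M) (a b : A),
    act (act (m ⊗ₜ[k] a) ⊗ₜ[k] b) = act (m ⊗ₜ[k] (a * b))

variable {k A C M : Type} [Field k] [Ring A] [Algebra k A]
  [AddCommGroup C] [Module k C] [Coalgebra k C] [AddCommGroup M] [Module k M]

/-- The compatibility condition making `M` an entwined `(A,C)_ψ`-module. -/
def EntwCompat (E : Entwining k A C) (α : RAct k A M) (ρM : RComod k C M) : Prop :=
  ρM.ρ ∘ₗ α.act = α.act.rTensor C ∘ₗ (TensorProduct.assoc k M A C).symm.toLinearMap ∘ₗ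
    E.ψ.lTensor M ∘ₗ (TensorProduct.assoc k M C A).toLinearMap ∘ₗ ρM.ρ.rTensor A

/-- The `A`-action on `M ⊗ C` induced by an entwining: `(m⊗c)·a = m·a_α ⊗ c^α`. -/
noncomputable def entwAct (E : Entwining k A C) (ν : M ⊗[k] A →ₗ[k] M) :
    (M ⊗[k] C) ⊗[k] A →ₗ[k] M ⊗[k] C :=
  ν.rTensor C ∘ₗ (TensorProduct.assoc k M A C).symm.toLinearMap ∘ₗ
    E.ψ.lTensor M ∘ₗ (TensorProduct.assoc k M C A).toLinearMap

/-- The `C`-coaction `M ⊗ Δ` on `M ⊗ C`. -/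
noncomputable def coactMC (k C M : Type) [Field k] [AddCommGroup C] [Module k C]
    [Coalgebra k C] [AddCommGroup M] [Module k M] :
    M ⊗[k] C →ₗ[k] (M ⊗[k] C) ⊗[k] C :=
  (TensorProduct.assoc k M C C).symm.toLinearMap ∘ₗ
    (Coalgebra.comul (R := k) (A := C)).lTensor M

/-- The coaction on `V ⊗ A` induced by an entwining: `v⊗a ↦ v₍₀₎ ⊗ ψ(v₍₁₎⊗a)`. -/
noncomputable def entwCoact {V : Type} [AddCommGroup V] [Module k V]
    (E : Entwining k A C) (ρV : V →ₗ[k] V ⊗[k] C) :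
    V ⊗[k] A →ₗ[k] (V ⊗[k] A) ⊗[k] C :=
  (TensorProduct.assoc k V A C).symm.toLinearMap ∘ₗ E.ψ.lTensor V ∘ₗ
    (TensorProduct.assoc k V C A).toLinearMap ∘ₗ ρV.rTensor A

/-- The action `V ⊗ μ` on `V ⊗ A`. -/
noncomputable def actVA (k : Type) (A V : Type) [Field k] [Ring A] [Algebra k A]
    [AddCommGroup V] [Module k V] :
    (V ⊗[k] A) ⊗[k] A →ₗ[k] V ⊗[k] A :=
  (mul' k A).lTensor V ∘ₗ (TensorProduct.assoc k V A A).toLinearMap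

/-- The canonical map `A ⊗ₖ A → A ⊗ C`, `a ⊗ a' ↦ a a'₍₀₎ ⊗ a'₍₁₎`. -/
noncomputable def canHat (ΔA : A →ₗ[k] A ⊗[k] C) : A ⊗[k] A →ₗ[k] A ⊗[k] C :=
  (mul' k A).rTensor C ∘ₗ (TensorProduct.assoc k A A C).symm.toLinearMap ∘ₗ ΔA.lTensor A

/-- The subspace of relations defining `A ⊗_B A` inside `A ⊗ₖ A`. -/
noncomputable def relSub (k : Type) [Field k] {A : Type} [Ring A] [Algebra k A]
    (B : Set A) : Submodule k (A ⊗[k] A) :=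
  Submodule.span k {x | ∃ a a' b : A, b ∈ B ∧ x = (a * b) ⊗ₜ[k] a' - a ⊗ₜ[k] (b * a')}

/-- Convolution product of `f g : C → A`. -/
noncomputable def conv (f g : C →ₗ[k] A) : C →ₗ[k] A :=
  mul' k A ∘ₗ TensorProduct.map f g ∘ₗ Coalgebra.comul (R := k)

/-- The convolution unit `η ∘ ε`. -/
noncomputable def convUnit (k C A : Type) [Field k] [Ring A] [Algebra k A]
    [AddCommGroup C] [Module k C] [Coalgebra k C] : C →ₗ[k] A :=
  Algebra.linearMap k A ∘ₗ Coalgebra.counit (R := k)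

variable (k) in
/-- The subalgebra-defining set `B = {b ∈ A : ∀ a, Δ_A(ba) = bΔ_A(a)}`. -/
noncomputable def coinvB (ΔA : A →ₗ[k] A ⊗[k] C) : Set A :=
  {b | ∀ a : A, ΔA (b * a) = (LinearMap.mulLeft k b).rTensor C (ΔA a)}

/-- `A` as a right module over itself. -/
noncomputable def mulRAct (k A : Type) [Field k] [Ring A] [Algebra k A] : RAct k A A where
  act := mul' k A
  act_one := fun m => by simp [LinearMap.mul'_apply]
  act_mul := fun m a b => by simp [LinearMap.mul'_apply, mul_assoc]

section Helpers

variable {k A C : Type} [Field k] [Ring A] [Algebra k A]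
  [AddCommGroup C] [Module k C] [Coalgebra k C]

/-- The multiplication-collapse map `a ⊗ (u ⊗ v) ↦ au ⊗ v`. -/
noncomputable def Mmap (k A C : Type) [Field k] [Ring A] [Algebra k A]
    [AddCommGroup C] [Module k C] : A ⊗[k] (A ⊗[k] C) →ₗ[k] A ⊗[k] C :=
  (mul' k A).rTensor C ∘ₗ (TensorProduct.assoc k A A C).symm.toLinearMap

lemma Mmap_tmul (a u : A) (v : C) :
    Mmap k A C (a ⊗ₜ[k] (u ⊗ₜ[k] v)) = (a * u) ⊗ₜ[k] v := by
  simp [Mmap, LinearMap.mul'_apply]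

lemma Mmap_one (t : A ⊗[k] C) : Mmap k A C ((1 : A) ⊗ₜ[k] t) = t := by
  induction t using TensorProduct.induction_on with
  | zero => simp
  | tmul u v => simp [Mmap_tmul]
  | add x y hx hy => rw [TensorProduct.tmul_add, map_add, hx, hy]

lemma Mmap_mul (a b : A) (t : A ⊗[k] C) :
    Mmap k A C (a ⊗ₜ[k] Mmap k A C (b ⊗ₜ[k] t)) = Mmap k A C ((a * b) ⊗ₜ[k] t) := by
  induction t using TensorProduct.induction_on with
  | zero => simp
  | tmul u v => simp [Mmap_tmul, mul_assoc]
  | add x y hx hy =>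
      rw [TensorProduct.tmul_add, map_add, TensorProduct.tmul_add, map_add,
        TensorProduct.tmul_add, map_add, hx, hy]

lemma Mmap_mulLeft (b : A) (t : A ⊗[k] C) :
    Mmap k A C (b ⊗ₜ[k] t) = (LinearMap.mulLeft k b).rTensor C t := by
  induction t using TensorProduct.induction_on with
  | zero => simp
  | tmul u v => simp [Mmap_tmul]
  | add x y hx hy => rw [TensorProduct.tmul_add, map_add, hx, map_add, hy]

/-- Convolution action of `f : C → A` on `h : C → A ⊗ C`. -/
noncomputable def starm (f : C →ₗ[k] A) (h : C →ₗ[k] A ⊗[k] C) : C →ₗ[k] A ⊗[k] C :=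
  Mmap k A C ∘ₗ TensorProduct.map f h ∘ₗ Coalgebra.comul (R := k)

lemma starm_apply (f : C →ₗ[k] A) (h : C →ₗ[k] A ⊗[k] C) (c : C) :
    starm f h c = Mmap k A C (TensorProduct.map f h (Coalgebra.comul (R := k) c)) := rfl

lemma starm_unit (h : C →ₗ[k] A ⊗[k] C) : starm (convUnit k C A) h = h := by
  ext c
  have key : (Mmap k A C ∘ₗ TensorProduct.map (convUnit k C A) h : C ⊗[k] C →ₗ[k] A ⊗[k] C)
      = h ∘ₗ (TensorProduct.lid k C).toLinearMap ∘ₗ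
        (Coalgebra.counit (R := k) (A := C)).rTensor C := by
    apply TensorProduct.ext'
    intro a b
    simp only [LinearMap.comp_apply, TensorProduct.map_tmul, LinearMap.rTensor_tmul,
      LinearEquiv.coe_coe, TensorProduct.lid_tmul, map_smul]
    rw [convUnit, LinearMap.comp_apply, Algebra.linearMap_apply,
      Algebra.algebraMap_eq_smul_one, ← TensorProduct.smul_tmul', map_smul, Mmap_one]
  have := LinearMap.congr_fun key (Coalgebra.comul (R := k) c)
  rw [starm_apply, ← LinearMap.comp_apply, this]
  simp only [LinearMap.comp_apply, ← LinearMap.comp_apply (Coalgebra.counit.rTensor C),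
    Coalgebra.rTensor_counit_comp_comul]
  simp

lemma starm_assoc (f g : C →ₗ[k] A) (h : C →ₗ[k] A ⊗[k] C) :
    starm f (starm g h) = starm (conv f g) h := by
  ext c
  have h1 : TensorProduct.map f (starm g h)
      = TensorProduct.map f (Mmap k A C ∘ₗ TensorProduct.map g h) ∘ₗ
        (Coalgebra.comul (R := k) (A := C)).lTensor C := by
    apply TensorProduct.ext'
    intro a b
    simp [starm_apply]
  have h2 : TensorProduct.map (conv f g) h
      = TensorProduct.map (mul' k A ∘ₗ TensorProduct.map f g) h ∘ₗ
        (Coalgebra.comul (R := k) (A := C)).rTensor C := by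
    apply TensorProduct.ext'
    intro a b
    simp [conv]
  have key : (Mmap k A C ∘ₗ TensorProduct.map f (Mmap k A C ∘ₗ TensorProduct.map g h)) ∘ₗ
      (TensorProduct.assoc k C C C).toLinearMap
      = Mmap k A C ∘ₗ TensorProduct.map (mul' k A ∘ₗ TensorProduct.map f g) h := by
    apply TensorProduct.ext_threefold
    intro x y z
    simp only [LinearMap.comp_apply, LinearEquiv.coe_coe, TensorProduct.assoc_tmul,
      TensorProduct.map_tmul, LinearMap.mul'_apply]
    rw [Mmap_mul]
  rw [starm_apply, starm_apply, h1, h2, LinearMap.comp_apply, LinearMap.comp_apply,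
    ← Coalgebra.coassoc_apply]
  exact LinearMap.congr_fun key ((Coalgebra.comul (R := k) (A := C)).rTensor C
    (Coalgebra.comul (R := k) c))

end Helpers

/-- if `(A,C)_ψ` is an entwining structure with `A` a right
`(A,C)_ψ`-module via its product and coaction, and `Φ : C → A` is a convolution
invertible right `C`-comodule map, then `ψ(c₍₁₎ ⊗ Φ⁻¹(c₍₂₎)) = Φ⁻¹(c)1₍₀₎ ⊗ 1₍₁₎`. -/
theorem statement5 {k A C : Type} [Field k] [Ring A] [Algebra k A]
    [AddCommGroup C] [Module k C] [Coalgebra k C]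
    (E : Entwining k A C) (ΔA : RComod k C A)
    (hAmod : EntwCompat E (mulRAct k A) ΔA)
    (Φ Φinv : C →ₗ[k] A)
    (hconv1 : conv Φ Φinv = convUnit k C A) (hconv2 : conv Φinv Φ = convUnit k C A)
    (hcolin : ΔA.ρ ∘ₗ Φ = Φ.rTensor C ∘ₗ Coalgebra.comul (R := k)) :
    ∀ c : C, E.ψ (Φinv.lTensor C (Coalgebra.comul (R := k) c)) =
      (LinearMap.mulLeft k (Φinv c)).rTensor C (ΔA.ρ 1) := by
  set G : C →ₗ[k] A ⊗[k] C :=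
    E.ψ ∘ₗ Φinv.lTensor C ∘ₗ Coalgebra.comul (R := k) with hG
  -- Step 1: Φ ⋆ G = ΔA.ρ ∘ conv Φ Φinv
  have main1 : starm Φ G = ΔA.ρ ∘ₗ conv Φ Φinv := by
    ext c
    have h1 : TensorProduct.map Φ G
        = TensorProduct.map Φ (E.ψ ∘ₗ Φinv.lTensor C) ∘ₗ
          (Coalgebra.comul (R := k) (A := C)).lTensor C := by
      apply TensorProduct.ext'
      intro a b
      simp [hG]
    have h2 : ΔA.ρ.rTensor A ∘ₗ TensorProduct.map Φ Φinv
        = TensorProduct.map (Φ.rTensor C) Φinv ∘ₗ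
          (Coalgebra.comul (R := k) (A := C)).rTensor C := by
      apply TensorProduct.ext'
      intro a b
      simp only [LinearMap.comp_apply, TensorProduct.map_tmul, LinearMap.rTensor_tmul]
      rw [← LinearMap.comp_apply, hcolin]
      rfl
    have key : (Mmap k A C ∘ₗ TensorProduct.map Φ (E.ψ ∘ₗ Φinv.lTensor C)) ∘ₗ
        (TensorProduct.assoc k C C C).toLinearMap
        = (Mmap k A C ∘ₗ E.ψ.lTensor A ∘ₗ (TensorProduct.assoc k A C A).toLinearMap) ∘ₗ
          TensorProduct.map (Φ.rTensor C) Φinv := by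
      apply TensorProduct.ext_threefold
      intro x y z
      simp
    have hA := LinearMap.congr_fun hAmod (TensorProduct.map Φ Φinv
      (Coalgebra.comul (R := k) c))
    rw [EntwCompat] at hAmod
    have hRHS : (ΔA.ρ ∘ₗ conv Φ Φinv) c
        = ((Mmap k A C ∘ₗ E.ψ.lTensor A ∘ₗ (TensorProduct.assoc k A C A).toLinearMap) ∘ₗ
            TensorProduct.map (Φ.rTensor C) Φinv)
          ((Coalgebra.comul (R := k) (A := C)).rTensor C (Coalgebra.comul (R := k) c)) := by
      have : (ΔA.ρ ∘ₗ conv Φ Φinv) c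
          = (ΔA.ρ ∘ₗ (mulRAct k A).act)
            (TensorProduct.map Φ Φinv (Coalgebra.comul (R := k) c)) := rfl
      rw [this, hAmod]
      simp only [LinearMap.comp_apply, Mmap]
      rw [← LinearMap.comp_apply (ΔA.ρ.rTensor A), h2]
      rfl
    rw [hRHS, ← key]
    simp only [LinearMap.comp_apply, LinearEquiv.coe_coe]
    rw [Coalgebra.coassoc_apply, starm_apply, h1]
    rfl
  -- Step 2: chain of equalities
  have chain : G = starm Φinv (ΔA.ρ ∘ₗ convUnit k C A) := by
    rw [← hconv1, ← main1, starm_assoc, hconv2, starm_unit]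
  -- Step 3: compute starm Φinv (ΔA.ρ ∘ convUnit)
  intro c
  have key3 : Mmap k A C ∘ₗ TensorProduct.map Φinv (ΔA.ρ ∘ₗ convUnit k C A)
      = (Mmap k A C ∘ₗ (TensorProduct.mk k A (A ⊗[k] C)).flip (ΔA.ρ 1) ∘ₗ Φinv ∘ₗ
          (TensorProduct.rid k C).toLinearMap) ∘ₗ
        (Coalgebra.counit (R := k) (A := C)).lTensor C := by
    apply TensorProduct.ext'
    intro a b
    simp only [LinearMap.comp_apply, TensorProduct.map_tmul, LinearMap.lTensor_tmul,
      LinearEquiv.coe_coe, TensorProduct.rid_tmul, map_smul, convUnit,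
      Algebra.linearMap_apply, Algebra.algebraMap_eq_smul_one,
      TensorProduct.mk_apply, LinearMap.flip_apply]
    rw [TensorProduct.tmul_smul, map_smul]
  have hGc : E.ψ (Φinv.lTensor C (Coalgebra.comul (R := k) c)) = G c := rfl
  rw [hGc, chain, starm_apply, ← LinearMap.comp_apply, key3]
  simp only [LinearMap.comp_apply]
  rw [← LinearMap.comp_apply (Coalgebra.counit.lTensor C), Coalgebra.lTensor_counit_comp_comul]
  simp only [LinearMap.flip_apply, TensorProduct.mk_apply, LinearEquiv.coe_coe,
    TensorProduct.rid_tmul, one_smul]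
  rw [Mmap_mulLeft]
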